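/- Let μ = ω_1 + ω_{n−2} ∈ ℤ^n with n ≥ 4 (so μ = (2,1,…,1,0)). The types μ' ∈ ℕ^n of normalized semi-modules for m = n−1, n whose dominant conjugate μ'_dom satisfies μ'_dom ⪯ μ and μ' ∈ W₀μ are exactly the vectors w_max μ' = s_{l+1} ⋯ s_{n−3} s_{n−2} s_{k−1} ⋯ s_2 s_1 · μ for integers 1 ≤ k ≤ n−2 and k ≤ l ≤ n−2; in particular there are exactly (n−1)(n−2)/2 such types. -/

import Mathlib

open Finset

lemma prodSwap_apply (m : ℕ) : ∀ (i x : ℕ),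
    (((List.range' i m).map (fun j => Equiv.swap j (j+1))).prod : Equiv.Perm ℕ) x =
      if x = i + m then i else if i ≤ x ∧ x < i + m then x + 1 else x := by
  induction m with
  | zero => intro i x; simp only [List.range', List.map_nil, List.prod_nil,
      Equiv.Perm.one_apply]; split_ifs <;> omega
  | succ m ih =>
    intro i x
    rw [List.range'_succ]
    simp only [List.map_cons, List.prod_cons, Equiv.Perm.mul_apply]
    rw [ih (i+1) x]
    rcases Nat.lt_trichotomy x (i+1+m) with h | h | h
    · rcases Nat.lt_or_ge x (i+1) with h2 | h2
      · rw [if_neg (by omega), if_neg (by omega)]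
        rcases eq_or_lt_of_le (Nat.lt_succ_iff.mp h2) with rfl | h3
        · rw [Equiv.swap_apply_left, if_neg (by omega), if_pos (by omega)]
        · rw [Equiv.swap_apply_of_ne_of_ne (by omega) (by omega), if_neg (by omega),
            if_neg (by omega)]
      · rw [if_neg (by omega), if_pos ⟨h2, h⟩,
          Equiv.swap_apply_of_ne_of_ne (by omega) (by omega), if_neg (by omega),
          if_pos (by omega)]
    · rw [if_pos h, Equiv.swap_apply_right, if_pos (by omega)]
    · rw [if_neg (by omega), if_neg (by omega),
        Equiv.swap_apply_of_ne_of_ne (by omega) (by omega), if_neg (by omega),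
        if_neg (by omega)]

lemma prodSwapRev_apply (m : ℕ) : ∀ (i x : ℕ),
    ((((List.range' i m).reverse).map (fun j => Equiv.swap j (j+1))).prod : Equiv.Perm ℕ) x =
      if x = i then i + m else if i < x ∧ x ≤ i + m then x - 1 else x := by
  induction m with
  | zero => intro i x; simp only [List.range', List.reverse_nil, List.map_nil, List.prod_nil,
      Equiv.Perm.one_apply]; split_ifs <;> omega
  | succ m ih =>
    intro i x
    rw [List.range'_concat]
    simp only [List.reverse_append, List.reverse_singleton, List.singleton_append,
      List.map_cons, List.prod_cons, Equiv.Perm.mul_apply, one_mul]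
    rw [ih i x]
    rcases eq_or_ne x i with rfl | hxi
    · rw [if_pos rfl, if_pos rfl, Equiv.swap_apply_left]
      omega
    · rw [if_neg hxi, if_neg hxi]
      rcases Nat.lt_or_ge (i+m) x with h | h
      · rw [if_neg (by omega)]
        rcases eq_or_ne x (i+m+1) with rfl | h2
        · rw [Equiv.swap_apply_right, if_pos (by omega)]
          omega
        · rw [Equiv.swap_apply_of_ne_of_ne (by omega) (by omega), if_neg (by omega)]
      · rcases Nat.lt_or_ge i x with h3 | h3
        · rw [if_pos ⟨h3, h⟩, Equiv.swap_apply_of_ne_of_ne (by omega) (by omega),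
            if_pos (by omega)]
        · rw [if_neg (by omega), Equiv.swap_apply_of_ne_of_ne (by omega) (by omega),
            if_neg (by omega)]

lemma winv_apply (n k l : ℕ) (hn : 4 ≤ n) (hk1 : 1 ≤ k) (hkl : k ≤ l) (hl : l ≤ n-2) (t : ℕ) :
    ((((List.range' (l + 1) (n - 2 - l)) ++ (List.range' 1 (k - 1)).reverse).map
        (fun j => Equiv.swap j (j + 1))).prod)⁻¹ t =
    if t = k then 1 else if t = l + 1 then n - 1
    else if 1 ≤ t ∧ t < k then t + 1
    else if l + 1 < t ∧ t ≤ n - 1 then t - 1 else t := by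
  have hrw : ((((List.range' (l + 1) (n - 2 - l)) ++ (List.range' 1 (k - 1)).reverse).map
        (fun j => Equiv.swap j (j + 1))).prod)⁻¹
      = ((List.range' 1 (k-1)).map (fun j => Equiv.swap j (j + 1))).prod *
        (((List.range' (l+1) (n-2-l)).reverse).map (fun j => Equiv.swap j (j + 1))).prod := by
    rw [List.prod_inv_reverse]
    simp only [List.map_map, List.map_append, List.reverse_append, List.map_reverse,
      List.reverse_reverse]
    rw [List.prod_append]
    congr 2 <;> · apply List.map_congr_left; intro j _; simp [Equiv.swap_inv]
  rw [hrw, Equiv.Perm.mul_apply, prodSwapRev_apply, prodSwap_apply]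
  split_ifs <;> omega

def stmt19M (n p q : ℕ) : ℕ → ℕ := fun a =>
  if 1 ≤ a ∧ a ≤ n then (if n+1-a = p then 2 else if n+1-a = q ∨ a = 1 then 0 else 1) else 0

lemma M_eq (n k l : ℕ) (hn : 4 ≤ n) (hk1 : 1 ≤ k) (hk2 : k ≤ n-2) (hkl : k ≤ l) (hl : l ≤ n-2)
    (μ : ℕ → ℕ) (hμ : ∀ a, μ a = if a = 1 then 2 else if 2 ≤ a ∧ a ≤ n - 2 then 1 else 0)
    (a : ℕ) :
    (if 1 ≤ a ∧ a ≤ n then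
        μ (((((List.range' (l + 1) (n - 2 - l)) ++
            (List.range' 1 (k - 1)).reverse).map
              (fun j => Equiv.swap j (j + 1))).prod)⁻¹ (n + 1 - a))
      else 0)
    = stmt19M n k (l+1) a := by
  unfold stmt19M
  by_cases h : 1 ≤ a ∧ a ≤ n
  · rw [if_pos h, if_pos h, winv_apply n k l hn hk1 hkl hl, hμ]
    split_ifs <;> omega
  · rw [if_neg h, if_neg h]

lemma M_rev (n p q a : ℕ) (hn : 4 ≤ n) (hp : 1 ≤ p) (hpn : p ≤ n-1) (hq : 1 ≤ q)
    (hqn : q ≤ n-1) (ha : 1 ≤ a) (han : a ≤ n) :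
    stmt19M n p q (n+1-a) = if a = p then 2 else if a = q ∨ a = n then 0 else 1 := by
  unfold stmt19M
  split_ifs <;> omega

lemma nu_sum (n p q t : ℕ) (hp : 1 ≤ p) (hpn : p ≤ n-1) (hq : 1 ≤ q) (hqn : q ≤ n-1)
    (hpq : p ≠ q) (hn : 4 ≤ n) (ht : t ≤ n) :
    (∑ a ∈ Finset.Icc 1 t, (if a = p then 2 else if a = q ∨ a = n then 0 else 1))
      + ((if q ≤ t then 1 else 0) + (if n ≤ t then 1 else 0))
    = t + (if p ≤ t then 1 else 0) := by
  have h1 : ∑ a ∈ Finset.Icc 1 t,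
      ((if a = p then (2:ℕ) else if a = q ∨ a = n then 0 else 1)
        + ((if a = q then 1 else 0) + (if a = n then 1 else 0)))
      = ∑ a ∈ Finset.Icc 1 t, (1 + if a = p then 1 else 0) := by
    apply Finset.sum_congr rfl
    intro a ha
    simp only [Finset.mem_Icc] at ha
    split_ifs <;> omega
  simp only [Finset.sum_add_distrib, Finset.sum_ite_eq', Finset.sum_const, smul_eq_mul,
    mul_one, Finset.mem_Icc, Nat.card_Icc] at h1
  split_ifs at h1 ⊢ <;> omega

lemma sum_rev (n : ℕ) (f : ℕ → ℕ) :
    ∑ a ∈ Finset.Icc 1 n, f (n+1-a) = ∑ a ∈ Finset.Icc 1 n, f a := by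
  apply Finset.sum_nbij' (fun a => n+1-a) (fun a => n+1-a) <;>
    simp only [Finset.mem_Icc] <;> intro a ha <;> first | omega | trivial

lemma sum_M (n p q : ℕ) (hn : 4 ≤ n) (hp : 1 ≤ p) (hpn : p ≤ n-1) (hq : 1 ≤ q)
    (hqn : q ≤ n-1) (hpq : p ≠ q) :
    ∑ a ∈ Finset.Icc 1 n, stmt19M n p q a = n - 1 := by
  rw [← sum_rev n (stmt19M n p q)]
  have h1 : ∑ a ∈ Finset.Icc 1 n, stmt19M n p q (n+1-a)
      = ∑ a ∈ Finset.Icc 1 n, (if a = p then 2 else if a = q ∨ a = n then 0 else 1) := by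
    apply Finset.sum_congr rfl
    intro a ha
    simp only [Finset.mem_Icc] at ha
    exact M_rev n p q a hn hp hpn hq hqn ha.1 ha.2
  rw [h1]
  have := nu_sum n p q n hp hpn hq hqn hpq hn le_rfl
  split_ifs at this <;> omega

lemma mu_sum (n t : ℕ) (hn : 4 ≤ n) (ht1 : 1 ≤ t) (ht : t ≤ n)
    (μ : ℕ → ℕ) (hμ : ∀ a, μ a = if a = 1 then 2 else if 2 ≤ a ∧ a ≤ n - 2 then 1 else 0) :
    (∑ a ∈ Finset.Icc 1 t, μ a) + ((if n-1 ≤ t then 1 else 0) + (if n ≤ t then 1 else 0))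
      = t + 1 := by
  have h1 : ∑ a ∈ Finset.Icc 1 t,
      (μ a + ((if a = n-1 then 1 else 0) + (if a = n then 1 else 0)))
      = ∑ a ∈ Finset.Icc 1 t, (1 + if a = 1 then 1 else 0) := by
    apply Finset.sum_congr rfl
    intro a ha
    simp only [Finset.mem_Icc] at ha
    rw [hμ]
    split_ifs <;> omega
  simp only [Finset.sum_add_distrib, Finset.sum_ite_eq', Finset.sum_const, smul_eq_mul,
    mul_one, Finset.mem_Icc, Nat.card_Icc] at h1
  split_ifs at h1 ⊢ <;> omega

lemma M_le2 (n p q a : ℕ) : stmt19M n p q a ≤ 2 := by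
  unfold stmt19M; split_ifs <;> omega

lemma M_eq2 (n p q a : ℕ) (hpn : p ≤ n - 1) (hn : 4 ≤ n) (h : stmt19M n p q a = 2) :
    a = n + 1 - p := by
  unfold stmt19M at h; split_ifs at h <;> omega

lemma Icc_split (n : ℕ) (hn : 1 ≤ n) (f : ℕ → ℕ) :
    ∑ a ∈ Finset.Icc 1 n, f a = f 1 + ∑ a ∈ Finset.Icc 2 n, f a := by
  have h : Finset.Icc 1 n = insert 1 (Finset.Icc 2 n) := by
    ext a; simp only [Finset.mem_Icc, Finset.mem_insert]; omega
  rw [h, Finset.sum_insert (by simp)]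

lemma sum_rev2 (n : ℕ) (hn : 1 ≤ n) (f : ℕ → ℕ) :
    ∑ a ∈ Finset.Icc 1 (n-1), f (n+1-a) = ∑ a ∈ Finset.Icc 2 n, f a := by
  apply Finset.sum_nbij' (fun a => n+1-a) (fun a => n+1-a) <;>
    simp only [Finset.mem_Icc] <;> intro a ha <;> first | omega | trivial

lemma card_pairs (m : ℕ) :
    ((Finset.Icc 1 m ×ˢ Finset.Icc 1 m).filter (fun pq => pq.1 < pq.2)).card
      = m * (m-1) / 2 := by
  rw [Finset.card_eq_sum_card_fiberwise (f := Prod.snd) (t := Finset.Icc 1 m)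
    (by intro x hx; simp only [Finset.mem_coe, Finset.mem_filter, Finset.mem_product] at hx; exact hx.1.2)]
  have h1 : ∀ q ∈ Finset.Icc 1 m,
      ((((Finset.Icc 1 m ×ˢ Finset.Icc 1 m).filter (fun pq => pq.1 < pq.2)).filter
        (fun a => a.2 = q)).card) = q - 1 := by
    intro q hq
    simp only [Finset.mem_Icc] at hq
    have h2 : (((Finset.Icc 1 m ×ˢ Finset.Icc 1 m).filter (fun pq => pq.1 < pq.2)).filter
        (fun a => a.2 = q)) = (Finset.Icc 1 (q-1)).image (fun p => (p, q)) := by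
      ext ⟨x1, x2⟩
      simp only [Finset.mem_filter, Finset.mem_product, Finset.mem_Icc, Finset.mem_image,
        Prod.mk.injEq]
      constructor
      · rintro ⟨⟨⟨h3, h4⟩, h5⟩, rfl⟩
        exact ⟨x1, by omega, rfl, rfl⟩
      · rintro ⟨p, hp, rfl, rfl⟩
        omega
    rw [h2, Finset.card_image_of_injective _ (fun a b hab => by
      simpa using congrArg Prod.fst hab), Nat.card_Icc]
    omega
  rw [Finset.sum_congr rfl h1]
  have h3 : ∑ q ∈ Finset.Icc 1 m, (q - 1) = ∑ i ∈ Finset.range m, i := by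
    apply Finset.sum_nbij' (fun q => q-1) (fun i => i+1) <;>
      simp only [Finset.mem_Icc, Finset.mem_range] <;> intro a ha <;> first | omega | trivial
  rw [h3, Finset.sum_range_id]

def stmt19rev (n : ℕ) : Equiv.Perm ℕ where
  toFun a := if 1 ≤ a ∧ a ≤ n then n+1-a else a
  invFun a := if 1 ≤ a ∧ a ≤ n then n+1-a else a
  left_inv a := by dsimp only; split_ifs <;> omega
  right_inv a := by dsimp only; split_ifs <;> omega

lemma stmt19rev_apply (n a : ℕ) :
    (stmt19rev n : Equiv.Perm ℕ) a = if 1 ≤ a ∧ a ≤ n then n+1-a else a := rfl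

lemma M_inj (n p q p' q' : ℕ) (hn : 4 ≤ n) (hp : 1 ≤ p) (hpq : p < q) (hqn : q ≤ n-1)
    (hp' : 1 ≤ p') (hpq' : p' < q') (hqn' : q' ≤ n-1)
    (h : stmt19M n p q = stmt19M n p' q') : p = p' ∧ q = q' := by
  have h1 := congrFun h (n+1-p)
  have h2 := congrFun h (n+1-q)
  rw [M_rev n p q p hn hp (by omega) (by omega) hqn hp (by omega),
    M_rev n p' q' p hn hp' (by omega) (by omega) hqn' hp (by omega)] at h1
  rw [M_rev n p q q hn hp (by omega) (by omega) hqn (by omega) (by omega),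
    M_rev n p' q' q hn hp' (by omega) (by omega) hqn' (by omega) (by omega)] at h2
  have hpp : p = p' := by split_ifs at h1 <;> omega
  subst hpp
  have hqq : q = q' := by split_ifs at h2 <;> omega
  exact ⟨rfl, hqq⟩

lemma M_mem (n p q : ℕ) (hn : 4 ≤ n) (hp : 1 ≤ p) (hpq : p < q) (hqn : q ≤ n-1)
    (μ : ℕ → ℕ) (hμ : ∀ a, μ a = if a = 1 then 2 else if 2 ≤ a ∧ a ≤ n - 2 then 1 else 0) :
    (∀ a : ℕ, (a = 0 ∨ n < a) → stmt19M n p q a = 0) ∧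
    (∃ σ : Equiv.Perm ℕ, (∀ a, 1 ≤ a ∧ a ≤ n ↔ 1 ≤ σ a ∧ σ a ≤ n) ∧
      ∀ a, 1 ≤ a → a ≤ n → stmt19M n p q a = μ (σ a)) ∧
    (∀ σ : Equiv.Perm ℕ, (∀ a, 1 ≤ a ∧ a ≤ n ↔ 1 ≤ σ a ∧ σ a ≤ n) →
      (∀ a b, 1 ≤ a → a ≤ b → b ≤ n → stmt19M n p q (σ b) ≤ stmt19M n p q (σ a)) →
      (∀ t, 1 ≤ t → t ≤ n →
        ∑ a ∈ Finset.Icc 1 t, stmt19M n p q (σ a) ≤ ∑ a ∈ Finset.Icc 1 t, μ a) ∧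
      ∑ a ∈ Finset.Icc 1 n, stmt19M n p q (σ a) = ∑ a ∈ Finset.Icc 1 n, μ a) ∧
    (∀ t, 1 ≤ t → t ≤ n →
      t * (n - 1) ≤ n * ∑ a ∈ Finset.Icc 1 t, stmt19M n p q (n + 1 - a)) ∧
    ∑ a ∈ Finset.Icc 1 n, stmt19M n p q a = n - 1 := by
  have hq1 : 1 ≤ q := by omega
  have hpn : p ≤ n - 1 := by omega
  have hpq' : p ≠ q := by omega
  have hsum := sum_M n p q hn hp hpn hq1 hqn hpq'
  refine ⟨?_, ?_, ?_, ?_, hsum⟩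
  · intro a ha; unfold stmt19M; rw [if_neg (by omega)]
  · -- the permutation σ
    set l := q - 1 with hldef
    have hlq : l + 1 = q := by omega
    have hw := winv_apply n p l hn hp (by omega) (by omega)
    refine ⟨((((List.range' (l + 1) (n - 2 - l)) ++ (List.range' 1 (p - 1)).reverse).map
        (fun j => Equiv.swap j (j + 1))).prod)⁻¹ * stmt19rev n, ?_, ?_⟩
    · intro a
      simp only [Equiv.Perm.mul_apply, stmt19rev_apply]
      constructor
      · intro ha
        rw [if_pos ha, hw]
        split_ifs <;> omega
      · intro ha
        by_contra hc
        rw [if_neg hc, hw] at ha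
        split_ifs at ha <;> omega
    · intro a ha1 ha2
      have hMe := M_eq n p l hn hp (by omega) (by omega) (by omega) μ hμ a
      simp only [Equiv.Perm.mul_apply, stmt19rev_apply,
        if_pos (show 1 ≤ a ∧ a ≤ n from ⟨ha1, ha2⟩)]
      rw [← hlq, ← hMe, if_pos (show 1 ≤ a ∧ a ≤ n from ⟨ha1, ha2⟩)]
  · -- dominance
    intro σ hσr hmono
    have htot : ∑ a ∈ Finset.Icc 1 n, stmt19M n p q (σ a)
        = ∑ a ∈ Finset.Icc 1 n, stmt19M n p q a := by
      apply Finset.sum_nbij' σ σ.symm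
      · intro a ha
        simp only [Finset.mem_Icc] at ha ⊢
        exact (hσr a).1 ha
      · intro a ha
        simp only [Finset.mem_Icc] at ha ⊢
        have := (hσr (σ.symm a)).2
        rw [Equiv.apply_symm_apply] at this
        exact this ha
      · intro a _; exact σ.symm_apply_apply a
      · intro a _; exact σ.apply_symm_apply a
      · intro a _; rfl
    have hμtot : ∑ a ∈ Finset.Icc 1 n, μ a = n - 1 := by
      have := mu_sum n n hn (by omega) le_rfl μ hμ
      split_ifs at this <;> omega
    constructor
    · intro t ht1 ht2
      have hone : ∀ a, 2 ≤ a → a ≤ n → stmt19M n p q (σ a) ≤ 1 := by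
        intro a ha1 ha2
        by_contra hc
        push_neg at hc
        have h2 : stmt19M n p q (σ a) = 2 := le_antisymm (M_le2 n p q _) hc
        have h3 : stmt19M n p q (σ 1) = 2 := by
          have hm := hmono 1 a le_rfl (by omega) ha2
          have hl2 := M_le2 n p q (σ 1)
          omega
        have e2 := M_eq2 n p q (σ a) hpn hn h2
        have e3 := M_eq2 n p q (σ 1) hpn hn h3
        have : σ a = σ 1 := by omega
        have := σ.injective this
        omega
      have hb : ∑ a ∈ Finset.Icc 1 t, stmt19M n p q (σ a)
          ≤ ∑ a ∈ Finset.Icc 1 t, (if a = 1 then 2 else 1) := by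
        apply Finset.sum_le_sum
        intro a ha
        simp only [Finset.mem_Icc] at ha
        split_ifs with h
        · exact M_le2 n p q _
        · exact hone a (by omega) (by omega)
      have hb2 : ∑ a ∈ Finset.Icc 1 t, (if a = 1 then (2:ℕ) else 1) = t + 1 := by
        have hc : ∀ a ∈ Finset.Icc 1 t,
            (if a = 1 then (2:ℕ) else 1) = 1 + (if a = 1 then 1 else 0) := by
          intro a _; split_ifs <;> omega
        rw [Finset.sum_congr rfl hc]
        simp only [Finset.sum_add_distrib, Finset.sum_ite_eq', Finset.sum_const,
          smul_eq_mul, mul_one, Finset.mem_Icc, Nat.card_Icc]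
        split_ifs <;> omega
      have hb3 : ∑ a ∈ Finset.Icc 1 t, stmt19M n p q (σ a) ≤ n - 1 := by
        calc ∑ a ∈ Finset.Icc 1 t, stmt19M n p q (σ a)
            ≤ ∑ a ∈ Finset.Icc 1 n, stmt19M n p q (σ a) :=
              Finset.sum_le_sum_of_subset (Finset.Icc_subset_Icc_right ht2)
          _ = n - 1 := htot.trans hsum
      have hμt := mu_sum n t hn ht1 ht2 μ hμ
      split_ifs at hμt <;> omega
    · rw [htot, hsum, hμtot]
  · -- the ν_b condition
    intro t ht1 ht2
    have hν : ∑ a ∈ Finset.Icc 1 t, stmt19M n p q (n+1-a)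
        = ∑ a ∈ Finset.Icc 1 t, (if a = p then 2 else if a = q ∨ a = n then 0 else 1) := by
      apply Finset.sum_congr rfl
      intro a ha
      simp only [Finset.mem_Icc] at ha
      exact M_rev n p q a hn hp hpn hq1 hqn ha.1 (le_trans ha.2 ht2)
    rw [hν]
    have hns := nu_sum n p q t hp hpn hq1 hqn hpq' hn ht2
    by_cases hT : t = n
    · have hS : ∑ a ∈ Finset.Icc 1 t, (if a = p then (2:ℕ) else if a = q ∨ a = n then 0 else 1)
          = n - 1 := by split_ifs at hns <;> omega
      rw [hS, hT]
    · have hSt : t ≤ ∑ a ∈ Finset.Icc 1 t,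
          (if a = p then (2:ℕ) else if a = q ∨ a = n then 0 else 1) := by
        split_ifs at hns <;> omega
      calc t * (n-1) ≤ t * n := Nat.mul_le_mul le_rfl (by omega)
        _ = n * t := Nat.mul_comm t n
        _ ≤ n * _ := Nat.mul_le_mul le_rfl hSt
lemma arith1 (n q S : ℕ) (h4 : 4 ≤ n) (hq : 1 ≤ q) (hqn : q ≤ n - 1)
    (hle : q * (n-1) ≤ n * S) (hS : S = q - 1) : False := by
  subst hS
  obtain ⟨a, rfl⟩ : ∃ a, q = a + 1 := ⟨q-1, by omega⟩
  obtain ⟨b, rfl⟩ : ∃ b, n = a + b + 2 := ⟨n - a - 2, by omega⟩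
  have e1 : a + 1 - 1 = a := by omega
  have e2 : a + b + 2 - 1 = a + b + 1 := by omega
  rw [e1, e2] at hle
  nlinarith [hle]

lemma arith2 (n S : ℕ) (h4 : 4 ≤ n) (h1 : (n-1)*(n-1) ≤ n * S) (hS : S ≤ n-2) : False := by
  obtain ⟨m, rfl⟩ : ∃ m, n = m + 2 := ⟨n - 2, by omega⟩
  have e1 : m + 2 - 1 = m + 1 := by omega
  have e2 : m + 2 - 2 = m := by omega
  rw [e1] at h1
  rw [e2] at hS
  have h2 : (m+2) * S ≤ (m+2) * m := Nat.mul_le_mul le_rfl hS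
  nlinarith [h1, h2]

set_option maxHeartbeats 1000000

/-- for n ≥ 4 and μ = ω₁ + ω_{n−2} = (2,1,…,1,0,0) (1-based coordinates,
zero outside [1,n]), the types μ' ∈ ℕ^n of normalized semi-modules for m = n−1, n
(characterized by ν_b ⪯ w_max μ', where ν_b = ((n−1)/n,…,(n−1)/n)) with μ'_dom ⪯ μ and
μ' ∈ W₀μ are exactly the vectors with
w_max μ' = s_{l+1} ⋯ s_{n−3} s_{n−2} s_{k−1} ⋯ s_2 s_1 · μ for 1 ≤ k ≤ n−2 and
k ≤ l ≤ n−2; in particular there are exactly (n−1)(n−2)/2 such types. Here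
(w_max μ')(a) = μ'(n+1−a) and a permutation p acts on vectors by (p·v)(a) = v(p⁻¹ a). -/
theorem stmt_19 (n : ℕ) (hn : 4 ≤ n)
    (μ : ℕ → ℕ)
    (hμ : ∀ a, μ a = if a = 1 then 2 else if 2 ≤ a ∧ a ≤ n - 2 then 1 else 0)
    (Ty : Set (ℕ → ℕ))
    (hTy : Ty = {μ' : ℕ → ℕ |
      (∀ a : ℕ, (a = 0 ∨ n < a) → μ' a = 0) ∧
      -- μ' ∈ W₀ μ
      (∃ σ : Equiv.Perm ℕ, (∀ a, 1 ≤ a ∧ a ≤ n ↔ 1 ≤ σ a ∧ σ a ≤ n) ∧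
        ∀ a, 1 ≤ a → a ≤ n → μ' a = μ (σ a)) ∧
      -- the dominant conjugate of μ' is ⪯ μ
      (∀ σ : Equiv.Perm ℕ, (∀ a, 1 ≤ a ∧ a ≤ n ↔ 1 ≤ σ a ∧ σ a ≤ n) →
        (∀ a b, 1 ≤ a → a ≤ b → b ≤ n → μ' (σ b) ≤ μ' (σ a)) →
        (∀ t, 1 ≤ t → t ≤ n →
          ∑ a ∈ Finset.Icc 1 t, μ' (σ a) ≤ ∑ a ∈ Finset.Icc 1 t, μ a) ∧
        ∑ a ∈ Finset.Icc 1 n, μ' (σ a) = ∑ a ∈ Finset.Icc 1 n, μ a) ∧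
      -- μ' is a type of a normalized semi-module for n−1, n: ν_b ⪯ w_max μ'
      (∀ t, 1 ≤ t → t ≤ n →
        t * (n - 1) ≤ n * ∑ a ∈ Finset.Icc 1 t, μ' (n + 1 - a)) ∧
      ∑ a ∈ Finset.Icc 1 n, μ' a = n - 1}) :
    Ty = {μ' : ℕ → ℕ | ∃ k l, 1 ≤ k ∧ k ≤ n - 2 ∧ k ≤ l ∧ l ≤ n - 2 ∧
        ∀ a : ℕ, μ' a =
          if 1 ≤ a ∧ a ≤ n then
            μ (((((List.range' (l + 1) (n - 2 - l)) ++
                (List.range' 1 (k - 1)).reverse).map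
                  (fun j => Equiv.swap j (j + 1))).prod)⁻¹ (n + 1 - a))
          else 0} ∧
    Ty.ncard = (n - 1) * (n - 2) / 2 := by
  have hn1 : 1 ≤ n := by omega
  have hTS : Ty = {μ' : ℕ → ℕ | ∃ p q, 1 ≤ p ∧ p < q ∧ q ≤ n - 1 ∧ μ' = stmt19M n p q} := by
    rw [hTy]
    ext μ'
    simp only [Set.mem_setOf_eq]
    constructor
    · rintro ⟨hsupp, ⟨σ, hσr, hσv⟩, _, hnu, hsum⟩
      have hb : ∀ x, 1 ≤ x → x ≤ n → (1 ≤ σ.symm x ∧ σ.symm x ≤ n) := by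
        intro x h1 h2
        have h3 := (hσr (σ.symm x)).2
        rw [Equiv.apply_symm_apply] at h3
        exact h3 ⟨h1, h2⟩
      have hb0 := hb 1 le_rfl (by omega)
      have hb1 := hb (n-1) (by omega) (by omega)
      have hb2 := hb n (by omega) le_rfl
      have hσ0 : σ (σ.symm 1) = 1 := σ.apply_symm_apply 1
      have hσ1 : σ (σ.symm (n-1)) = n-1 := σ.apply_symm_apply _
      have hσ2 : σ (σ.symm n) = n := σ.apply_symm_apply n
      have hne01 : σ.symm 1 ≠ σ.symm (n-1) := fun h => by
        have h' := congrArg σ h; rw [hσ0, hσ1] at h'; omega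
      have hne02 : σ.symm 1 ≠ σ.symm n := fun h => by
        have h' := congrArg σ h; rw [hσ0, hσ2] at h'; omega
      have hne12 : σ.symm (n-1) ≠ σ.symm n := fun h => by
        have h' := congrArg σ h; rw [hσ1, hσ2] at h'; omega
      have hform : ∀ a, 1 ≤ a → a ≤ n →
          μ' a = (if a = σ.symm 1 then 2
            else if a = σ.symm (n-1) ∨ a = σ.symm n then 0 else 1) := by
        intro a h1 h2
        rw [hσv a h1 h2, hμ (σ a)]
        have hσa := (hσr a).1 ⟨h1, h2⟩
        by_cases e0 : a = σ.symm 1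
        · subst e0; rw [hσ0]; simp
        · have g0 : σ a ≠ 1 := fun h => e0 (by rw [← h, Equiv.symm_apply_apply])
          by_cases e1 : a = σ.symm (n-1)
          · subst e1; rw [hσ1]; split_ifs <;> omega
          · by_cases e2 : a = σ.symm n
            · subst e2; rw [hσ2]; split_ifs <;> omega
            · have g1 : σ a ≠ n-1 := fun h => e1 (by rw [← h, Equiv.symm_apply_apply])
              have g2 : σ a ≠ n := fun h => e2 (by rw [← h, Equiv.symm_apply_apply])
              split_ifs <;> omega
      have h1 := hnu (n-1) (by omega) (by omega)
      rw [sum_rev2 n hn1 μ'] at h1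
      have hsplit := Icc_split n hn1 μ'
      have hμ'1 : μ' 1 = 0 := by
        by_contra hc
        exact arith2 n _ hn h1 (by omega)
      have h01 : 1 = σ.symm (n-1) ∨ 1 = σ.symm n := by
        have hf := hform 1 le_rfl (by omega)
        rw [hμ'1] at hf
        split_ifs at hf <;> first | omega | assumption
      obtain ⟨z, hz2, hzn, hzb0, hzform⟩ :
          ∃ z, 2 ≤ z ∧ z ≤ n ∧ z ≠ σ.symm 1 ∧ ∀ a, 1 ≤ a → a ≤ n →
            μ' a = (if a = σ.symm 1 then 2 else if a = z ∨ a = 1 then 0 else 1) := by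
        rcases h01 with h | h
        · refine ⟨σ.symm n, by omega, hb2.2, fun hh => hne02 hh.symm, ?_⟩
          intro a h1' h2'
          rw [hform a h1' h2']
          split_ifs <;> omega
        · refine ⟨σ.symm (n-1), by omega, hb1.2, fun hh => hne01 hh.symm, ?_⟩
          intro a h1' h2'
          rw [hform a h1' h2']
          split_ifs <;> omega
      have hb0ne1 : σ.symm 1 ≠ 1 := by rcases h01 with h | h <;> omega
      have hMf : ∀ a, μ' a = stmt19M n (n + 1 - σ.symm 1) (n + 1 - z) a := by
        intro a
        by_cases h : 1 ≤ a ∧ a ≤ n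
        · rw [hzform a h.1 h.2]
          unfold stmt19M
          rw [if_pos h]
          split_ifs <;> omega
        · rw [hsupp a (by omega)]
          unfold stmt19M
          rw [if_neg h]
      set p := n + 1 - σ.symm 1 with hpdef
      set q := n + 1 - z with hqdef
      have hp : 1 ≤ p := by omega
      have hpn : p ≤ n - 1 := by omega
      have hq1 : 1 ≤ q := by omega
      have hqn : q ≤ n - 1 := by omega
      have hpq' : p ≠ q := by omega
      have hνq := hnu q hq1 (by omega)
      have hν : ∑ a ∈ Finset.Icc 1 q, μ' (n+1-a)
          = ∑ a ∈ Finset.Icc 1 q, (if a = p then 2 else if a = q ∨ a = n then 0 else 1) := by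
        apply Finset.sum_congr rfl
        intro a ha
        simp only [Finset.mem_Icc] at ha
        rw [hMf (n+1-a)]
        exact M_rev n p q a hn hp hpn hq1 hqn ha.1 (by omega)
      rw [hν] at hνq
      have hns := nu_sum n p q q hp hpn hq1 hqn hpq' hn (by omega)
      have hpq : p < q := by
        by_contra hcon
        have hS : (∑ a ∈ Finset.Icc 1 q,
            (if a = p then (2:ℕ) else if a = q ∨ a = n then 0 else 1)) = q - 1 := by
          split_ifs at hns <;> omega
        rw [hS] at hνq
        obtain ⟨a, ha⟩ : ∃ a, q = a + 1 := ⟨q-1, by omega⟩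
        obtain ⟨b, hbdef⟩ : ∃ b, n = a + b + 2 := ⟨n - q - 1, by omega⟩
        rw [ha, hbdef] at hνq
        have e1 : a + 1 - 1 = a := by omega
        have e2 : a + b + 2 - 1 = a + b + 1 := by omega
        rw [e1, e2] at hνq
        nlinarith [hνq]
      exact ⟨p, q, hp, hpq, hqn, funext hMf⟩
    · rintro ⟨p, q, hp, hpq, hqn, rfl⟩
      exact M_mem n p q hn hp hpq hqn μ hμ
  constructor
  · rw [hTS]
    ext μ'
    simp only [Set.mem_setOf_eq]
    constructor
    · rintro ⟨p, q, hp, hpq, hqn, rfl⟩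
      obtain ⟨l, rfl⟩ : ∃ l, q = l + 1 := ⟨q - 1, by omega⟩
      exact ⟨p, l, hp, by omega, by omega, by omega,
        fun a => (M_eq n p l hn hp (by omega) (by omega) (by omega) μ hμ a).symm⟩
    · rintro ⟨k, l, hk1, hk2, hkl, hl, hf⟩
      exact ⟨k, l + 1, hk1, by omega, by omega,
        funext fun a => (hf a).trans (M_eq n k l hn hk1 hk2 hkl hl μ hμ a)⟩
  · have himg : {μ' : ℕ → ℕ | ∃ p q, 1 ≤ p ∧ p < q ∧ q ≤ n - 1 ∧ μ' = stmt19M n p q}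
        = (fun pq : ℕ × ℕ => stmt19M n pq.1 pq.2) ''
          ↑((Finset.Icc 1 (n-1) ×ˢ Finset.Icc 1 (n-1)).filter (fun pq => pq.1 < pq.2)) := by
      ext μ'
      simp only [Set.mem_setOf_eq, Set.mem_image, Finset.coe_filter, Finset.mem_product,
        Finset.mem_Icc]
      constructor
      · rintro ⟨p, q, hp, hpq, hqn, rfl⟩
        exact ⟨(p, q), ⟨⟨⟨hp, by omega⟩, ⟨by omega, hqn⟩⟩, hpq⟩, rfl⟩
      · rintro ⟨⟨p, q⟩, ⟨⟨⟨h1, h2⟩, ⟨h3, h4⟩⟩, h5⟩, rfl⟩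
        exact ⟨p, q, h1, h5, h4, rfl⟩
    have hinj : Set.InjOn (fun pq : ℕ × ℕ => stmt19M n pq.1 pq.2)
        ↑((Finset.Icc 1 (n-1) ×ˢ Finset.Icc 1 (n-1)).filter (fun pq => pq.1 < pq.2)) := by
      rintro ⟨p, q⟩ h ⟨p', q'⟩ h' heq
      simp only [Finset.coe_filter, Finset.mem_product, Finset.mem_Icc,
        Set.mem_setOf_eq] at h h'
      have hr := M_inj n p q p' q' hn h.1.1.1 h.2 h.1.2.2 h'.1.1.1 h'.2 h'.1.2.2 heq
      simp [Prod.ext_iff, hr.1, hr.2]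
    rw [hTS, himg, Set.ncard_image_of_injOn hinj, Set.ncard_coe_finset, card_pairs]
    have e : n - 1 - 1 = n - 2 := by omega
    rw [e]
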